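/- Let A, B be positive semidefinite matrices with A + B invertible, and let U be a unitary with √A·√B·U = √(√A·B·√A). Then a vector v ∈ supp(A) satisfies √B·v = λ·U·√A·v if and only if M(A⁺,B)·v = λ·v, where M(A⁺,B) = √(A⁺)·√(√A·B·√A)·√(A⁺). -/

import Mathlib

open scoped ComplexOrder

open Classical in
/-- The unique positive semidefinite square root of a positive semidefinite matrix
(junk value 0 otherwise). -/
noncomputable def psqrt {n : Type*} [Fintype n] [DecidableEq n] (X : Matrix n n ℂ) :
    Matrix n n ℂ :=
  if h : X.PosSemidef then
    (h.1.eigenvectorUnitary : Matrix n n ℂ) *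
      Matrix.diagonal ((↑) ∘ (Real.sqrt ·) ∘ h.1.eigenvalues) *
      (star h.1.eigenvectorUnitary : Matrix n n ℂ)
  else 0

/-- The range (support) of a matrix, i.e. the orthogonal complement of its kernel. -/
noncomputable def msupp {n : Type*} [Fintype n] [DecidableEq n] (X : Matrix n n ℂ) :
    Submodule ℂ (EuclideanSpace ℂ n) :=
  (LinearMap.ker (Matrix.toEuclideanLin X))ᗮ

/-- The kernel of a matrix, as a subspace of Euclidean space. -/
noncomputable def mker {n : Type*} [Fintype n] [DecidableEq n] (X : Matrix n n ℂ) :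
    Submodule ℂ (EuclideanSpace ℂ n) :=
  LinearMap.ker (Matrix.toEuclideanLin X)

/-- The generalized geometric mean M(A,B) = √A · √(√(A⁺) B √(A⁺)) · √A, where Ap
stands for the Moore–Penrose pseudoinverse A⁺ of A. -/
noncomputable def geoMean {n : Type*} [Fintype n] [DecidableEq n]
    (A Ap B : Matrix n n ℂ) : Matrix n n ℂ :=
  psqrt A * psqrt (psqrt Ap * B * psqrt Ap) * psqrt A

open Matrix in
/-- `Ap` is the Moore–Penrose pseudoinverse of `A` (the four Penrose conditions). -/
def IsMPInv {n : Type*} [Fintype n] [DecidableEq n] (A Ap : Matrix n n ℂ) : Prop :=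
  A * Ap * A = A ∧ Ap * A * Ap = Ap ∧ (A * Ap)ᴴ = A * Ap ∧ (Ap * A)ᴴ = Ap * A

namespace Matrix.PosSemidef

open Matrix MatrixOrder

variable {n : Type*} [Fintype n] [DecidableEq n]

noncomputable def sqrt {A : Matrix n n ℂ} (hA : A.PosSemidef) : Matrix n n ℂ :=
  (hA.1.eigenvectorUnitary : Matrix n n ℂ) *
    Matrix.diagonal ((↑) ∘ (Real.sqrt ·) ∘ hA.1.eigenvalues) *
    (star hA.1.eigenvectorUnitary : Matrix n n ℂ)

lemma sqrt_eq_cfc {A : Matrix n n ℂ} (hA : A.PosSemidef) : hA.sqrt = CFC.sqrt A := by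
  rw [CFC.sqrt_eq_cfc, cfc_nnreal_eq_real _ A, hA.1.cfc_eq]
  simp only [IsHermitian.cfc, Unitary.conjStarAlgAut_apply, sqrt]
  congr 2
  ext i j
  have h : ∀ k, max (hA.1.eigenvalues k) 0 = hA.1.eigenvalues k :=
    fun k => max_eq_left (hA.eigenvalues_nonneg k)
  simp [diagonal_apply, h]

lemma posSemidef_sqrt {A : Matrix n n ℂ} (hA : A.PosSemidef) : hA.sqrt.PosSemidef := by
  rw [sqrt_eq_cfc]; exact nonneg_iff_posSemidef.mp (CFC.sqrt_nonneg A)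

lemma sqrt_mul_self {A : Matrix n n ℂ} (hA : A.PosSemidef) : hA.sqrt * hA.sqrt = A := by
  rw [sqrt_eq_cfc]; exact CFC.sqrt_mul_sqrt_self A hA.nonneg

lemma eq_of_sq_eq_sq {A B : Matrix n n ℂ} (hA : A.PosSemidef) (hB : B.PosSemidef)
    (h : A ^ 2 = B ^ 2) : A = B :=
  (CFC.sq_eq_sq_iff A B hA.nonneg hB.nonneg).mp h

end Matrix.PosSemidef

namespace PencilAux

open Matrix

variable {n : Type*} [Fintype n] [DecidableEq n]

lemma commute_diag {d e : n → ℂ} (hde : ∀ i j, d i = d j → e i = e j)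
    {M : Matrix n n ℂ} (h : M * diagonal d = diagonal d * M) :
    M * diagonal e = diagonal e * M := by
  ext i j
  have h' : (M * diagonal d) i j = (diagonal d * M) i j := by rw [h]
  rw [mul_diagonal, diagonal_mul] at h'
  rw [mul_diagonal, diagonal_mul]
  rcases eq_or_ne (d i) (d j) with hd | hd
  · rw [hde i j hd, mul_comm]
  · have hM : M i j = 0 := by
      by_contra hne
      exact hd (mul_left_cancel₀ hne (by rw [mul_comm (M i j) (d i), h'])).symm
    simp [hM]

lemma commute_sqrt {B X : Matrix n n ℂ} (hB : B.PosSemidef) (h : X * B = B * X) :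
    X * hB.sqrt = hB.sqrt * X := by
  set V : Matrix n n ℂ := hB.1.eigenvectorUnitary.1 with hVdef
  have hVV : V * star V = 1 := (Matrix.mem_unitaryGroup_iff).mp hB.1.eigenvectorUnitary.2
  have hVV' : star V * V = 1 := (Matrix.mem_unitaryGroup_iff').mp hB.1.eigenvectorUnitary.2
  set d : n → ℂ := RCLike.ofReal ∘ hB.1.eigenvalues with hd
  set e : n → ℂ := RCLike.ofReal ∘ Real.sqrt ∘ hB.1.eigenvalues with he
  have hspec : B = V * diagonal d * star V := hB.1.spectral_theorem
  have hsqrt : hB.sqrt = V * diagonal e * star V := rfl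
  set M : Matrix n n ℂ := star V * X * V with hM
  have hMd : M * diagonal d = diagonal d * M := by
    have h2 : X * (V * diagonal d * star V) = (V * diagonal d * star V) * X := by
      rw [← hspec]; exact h
    calc M * diagonal d = star V * (X * (V * diagonal d * star V)) * V := by
          simp only [hM, Matrix.mul_assoc, hVV', Matrix.mul_one]
      _ = star V * ((V * diagonal d * star V) * X) * V := by rw [h2]
      _ = diagonal d * M := by
          simp only [hM, ← Matrix.mul_assoc]
          rw [hVV', Matrix.one_mul]
  have hMe : M * diagonal e = diagonal e * M := by
    refine commute_diag (fun i j hij => ?_) hMd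
    simp only [hd, Function.comp_apply] at hij
    have h2 : hB.1.eigenvalues i = hB.1.eigenvalues j := RCLike.ofReal_inj.mp hij
    simp [he, h2]
  have hVM : V * M = X * V := by
    rw [hM, ← Matrix.mul_assoc, ← Matrix.mul_assoc, hVV, Matrix.one_mul]
  have hMV : M * star V = star V * X := by
    rw [hM, Matrix.mul_assoc, Matrix.mul_assoc, hVV, Matrix.mul_one]
  calc X * hB.sqrt = (X * V) * diagonal e * star V := by
        rw [hsqrt, ← Matrix.mul_assoc, ← Matrix.mul_assoc]
    _ = V * (M * diagonal e) * star V := by rw [← hVM, Matrix.mul_assoc V M]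
    _ = V * (diagonal e * M) * star V := by rw [hMe]
    _ = V * diagonal e * (M * star V) := by simp only [Matrix.mul_assoc]
    _ = V * diagonal e * (star V * X) := by rw [hMV]
    _ = hB.sqrt * X := by rw [hsqrt]; simp only [Matrix.mul_assoc]

lemma sqrt_mulVec_zero_iff {X : Matrix n n ℂ} (hX : X.PosSemidef) (y : n → ℂ) :
    hX.sqrt *ᵥ y = 0 ↔ X *ᵥ y = 0 := by
  constructor
  · intro h
    have e : X *ᵥ y = hX.sqrt *ᵥ (hX.sqrt *ᵥ y) := by
      rw [mulVec_mulVec, hX.sqrt_mul_self]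
    rw [e, h, mulVec_zero]
  · intro h
    have h0 : star (hX.sqrt *ᵥ y) ⬝ᵥ (hX.sqrt *ᵥ y) = 0 := by
      rw [star_mulVec, ← dotProduct_mulVec, mulVec_mulVec, hX.posSemidef_sqrt.1.eq,
        hX.sqrt_mul_self, h, dotProduct_zero]
    exact dotProduct_star_self_eq_zero.mp h0

lemma mp_unique {A X Y : Matrix n n ℂ} (h1 : IsMPInv A X) (h2 : IsMPInv A Y) : X = Y := by
  obtain ⟨h1a, h1b, h1c, h1d⟩ := h1
  obtain ⟨h2a, h2b, h2c, h2d⟩ := h2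
  have hAX : A * X = A * Y := by
    calc A * X = (A * Y) * (A * X) := by
          simp only [← Matrix.mul_assoc]; rw [h2a]
      _ = ((A * X) * (A * Y))ᴴ := by rw [conjTranspose_mul, h2c, h1c]
      _ = (A * Y)ᴴ := by
          have e : (A * X) * (A * Y) = A * Y := by
            simp only [← Matrix.mul_assoc]; rw [h1a]
          rw [e]
      _ = A * Y := h2c
  have hXA : X * A = Y * A := by
    calc X * A = (X * A) * (Y * A) := by
          have e : (X * A) * (Y * A) = X * (A * Y * A) := by
            simp only [Matrix.mul_assoc]
          rw [e, h2a]
      _ = ((Y * A) * (X * A))ᴴ := by rw [conjTranspose_mul, h1d, h2d]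
      _ = (Y * A)ᴴ := by
          have e : (Y * A) * (X * A) = Y * A := by
            have e2 : (Y * A) * (X * A) = Y * (A * X * A) := by
              simp only [Matrix.mul_assoc]
            rw [e2, h1a]
          rw [e]
      _ = Y * A := h2d
  calc X = X * A * X := h1b.symm
    _ = X * (A * Y) := by rw [Matrix.mul_assoc, hAX]
    _ = (Y * A) * Y := by rw [← Matrix.mul_assoc, hXA]
    _ = Y := h2b

lemma mp_herm {A Ap : Matrix n n ℂ} (hAH : Aᴴ = A) (h : IsMPInv A Ap) : Apᴴ = Ap := by
  obtain ⟨h1, h2, h3, h4⟩ := h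
  have h' : IsMPInv A Apᴴ := by
    refine ⟨?_, ?_, ?_, ?_⟩
    · calc A * Apᴴ * A = (Aᴴ * Ap * Aᴴ)ᴴ := by
            simp only [conjTranspose_mul, conjTranspose_conjTranspose, Matrix.mul_assoc]
        _ = A := by rw [hAH, h1, hAH]
    · calc Apᴴ * A * Apᴴ = (Ap * Aᴴ * Ap)ᴴ := by
            simp only [conjTranspose_mul, conjTranspose_conjTranspose, Matrix.mul_assoc]
        _ = Apᴴ := by rw [hAH, h2]
    · have e : A * Apᴴ = Ap * A := by
        calc A * Apᴴ = (Ap * Aᴴ)ᴴ := by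
              simp only [conjTranspose_mul, conjTranspose_conjTranspose]
          _ = (Ap * A)ᴴ := by rw [hAH]
          _ = Ap * A := h4
      rw [e]; exact h4
    · have e : Apᴴ * A = A * Ap := by
        calc Apᴴ * A = (Aᴴ * Ap)ᴴ := by
              simp only [conjTranspose_mul, conjTranspose_conjTranspose]
          _ = (A * Ap)ᴴ := by rw [hAH]
          _ = A * Ap := h3
      rw [e]; exact h3
  exact mp_unique h' ⟨h1, h2, h3, h4⟩

end PencilAux

/-- For v in the support of A: √B v = λ U √A v iff M(A⁺,B) v = λ v, where
M(A⁺,B) = √(A⁺) √(√A B √A) √(A⁺). -/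
theorem pencil_eigen_iff_geoMean_eigen
    {n : Type*} [Fintype n] [DecidableEq n]
    (A B Ap U : Matrix n n ℂ) (hA : A.PosSemidef) (hB : B.PosSemidef)
    (hAB : IsUnit (A + B)) (hAp : IsMPInv A Ap)
    (hU : U ∈ Matrix.unitaryGroup n ℂ)
    (hpolar : psqrt A * psqrt B * U = psqrt (psqrt A * B * psqrt A))
    (v : EuclideanSpace ℂ n) (hv : v ∈ msupp A) (lam : ℂ) :
    Matrix.toEuclideanLin (psqrt B) v = lam • Matrix.toEuclideanLin (U * psqrt A) v ↔
      Matrix.toEuclideanLin (psqrt Ap * psqrt (psqrt A * B * psqrt A) * psqrt Ap) v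
        = lam • v := by
  classical
  open Matrix PencilAux in
  obtain ⟨hp1, hp2, hp3, hp4⟩ := hAp
  have hAH : Aᴴ = A := hA.1
  have hApH : Apᴴ = Ap := PencilAux.mp_herm hAH ⟨hp1, hp2, hp3, hp4⟩
  have hPcomm : A * Ap = Ap * A := by
    rw [← hp3, Matrix.conjTranspose_mul, hApH, hAH]
  -- unfold the psqrt's
  have hSdef : psqrt A = hA.sqrt := dif_pos hA
  have hTdef : psqrt B = hB.sqrt := dif_pos hB
  set S : Matrix n n ℂ := hA.sqrt with hS
  set T : Matrix n n ℂ := hB.sqrt with hT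
  have hSH : Sᴴ = S := hA.posSemidef_sqrt.1.eq
  have hTH : Tᴴ = T := hB.posSemidef_sqrt.1.eq
  have hSS : S * S = A := hA.sqrt_mul_self
  have hApPSD : Ap.PosSemidef := by
    have e : (S * Ap)ᴴ * (S * Ap) = Ap := by
      rw [Matrix.conjTranspose_mul, hApH, hSH]
      calc Ap * S * (S * Ap) = Ap * (S * S) * Ap := by simp only [Matrix.mul_assoc]
        _ = Ap := by rw [hSS, hp2]
    rw [← e]
    exact Matrix.posSemidef_conjTranspose_mul_self _
  have hRdef : psqrt Ap = hApPSD.sqrt := dif_pos hApPSD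
  set R : Matrix n n ℂ := hApPSD.sqrt with hR
  have hRH : Rᴴ = R := hApPSD.posSemidef_sqrt.1.eq
  have hRR : R * R = Ap := hApPSD.sqrt_mul_self
  have hSBS : (S * B * S).PosSemidef := by
    have e := hB.mul_mul_conjTranspose_same S
    rwa [hSH] at e
  have hCdef : psqrt (psqrt A * B * psqrt A) = hSBS.sqrt := by
    rw [hSdef]; exact dif_pos hSBS
  set C : Matrix n n ℂ := hSBS.sqrt with hC
  have hCH : Cᴴ = C := hSBS.posSemidef_sqrt.1.eq
  rw [hCdef, hSdef, hTdef] at hpolar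
  rw [hCdef, hTdef, hRdef, hSdef]
  -- C = Uᴴ * (T * S)
  have hC2 : C = Uᴴ * (T * S) := by
    calc C = Cᴴ := hCH.symm
      _ = (S * T * U)ᴴ := by rw [hpolar]
      _ = Uᴴ * (T * S) := by
          simp only [Matrix.conjTranspose_mul, hSH, hTH, Matrix.mul_assoc]
  -- commutation chain
  have c1 : Ap * S = S * Ap := PencilAux.commute_sqrt hA hPcomm.symm
  have c2 : S * R = R * S := PencilAux.commute_sqrt hApPSD c1.symm
  -- P := A * Ap is a PSD projection
  have hPP : (A * Ap) * (A * Ap) = A * Ap := by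
    calc (A * Ap) * (A * Ap) = (A * Ap * A) * Ap := by simp only [Matrix.mul_assoc]
      _ = A * Ap := by rw [hp1]
  have hPpsd : (A * Ap).PosSemidef := by
    have e : Sᴴ * Ap * S = A * Ap := by
      rw [hSH, Matrix.mul_assoc, c1, ← Matrix.mul_assoc, hSS]
    have := hApPSD.conjTranspose_mul_mul_same S
    rwa [e] at this
  -- N := S * R equals P
  have hRpsd : R.PosSemidef := hApPSD.posSemidef_sqrt
  have c3 : S * hRpsd.sqrt = hRpsd.sqrt * S := PencilAux.commute_sqrt hRpsd c2
  have hNpsd : (S * R).PosSemidef := by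
    have hWH : hRpsd.sqrtᴴ = hRpsd.sqrt := hRpsd.posSemidef_sqrt.1.eq
    have e : hRpsd.sqrt * S * hRpsd.sqrtᴴ = S * R := by
      rw [hWH, Matrix.mul_assoc, c3, ← Matrix.mul_assoc, hRpsd.sqrt_mul_self, c2]
    have := hA.posSemidef_sqrt.mul_mul_conjTranspose_same hRpsd.sqrt
    rwa [e] at this
  have hSR : S * R = A * Ap := by
    refine hNpsd.eq_of_sq_eq_sq hPpsd ?_
    have e1 : (S * R) ^ 2 = A * Ap := by
      rw [pow_two]
      calc (S * R) * (S * R) = S * (R * S) * R := by simp only [Matrix.mul_assoc]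
        _ = (S * S) * (R * R) := by rw [← c2]; simp only [Matrix.mul_assoc]
        _ = A * Ap := by rw [hSS, hRR]
    have e2 : (A * Ap) ^ 2 = A * Ap := by rw [pow_two, hPP]
    rw [e1, e2]
  have hRS : R * S = A * Ap := by rw [← c2, hSR]
  -- the vector w and the projection property
  set w : n → ℂ := (WithLp.equiv 2 (n → ℂ)) v with hw
  have hvw : v = (WithLp.equiv 2 (n → ℂ)).symm w := (Equiv.symm_apply_apply _ _).symm
  have hPw : (A * Ap) *ᵥ w = w := by
    set u : n → ℂ := w - (A * Ap) *ᵥ w with hu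
    have hAu : A *ᵥ u = 0 := by
      have e : A * (A * Ap) = A := by
        rw [hPcomm, ← Matrix.mul_assoc, hp1]
      rw [hu, Matrix.mulVec_sub, Matrix.mulVec_mulVec, e, sub_self]
    have humem : (WithLp.equiv 2 (n → ℂ)).symm u ∈
        LinearMap.ker (Matrix.toEuclideanLin A) := by
      rw [LinearMap.mem_ker, WithLp.equiv_symm_apply, Matrix.toEuclideanLin_apply_piLp_toLp, hAu]
      simp
    have hv' : v ∈ (LinearMap.ker (Matrix.toEuclideanLin A))ᗮ := hv
    have hinner : star u ⬝ᵥ w = 0 := by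
      have e := (Submodule.mem_orthogonal _ v).mp hv' _ humem
      rw [hvw] at e
      rwa [WithLp.equiv_symm_apply, EuclideanSpace.inner_toLp_toLp, dotProduct_comm] at e
    have hPu : (A * Ap) *ᵥ u = 0 := by
      rw [hu, Matrix.mulVec_sub, Matrix.mulVec_mulVec, hPP, sub_self]
    have hstarP : star u ᵥ* (A * Ap) = 0 := by
      have e : star ((A * Ap) *ᵥ u) = star u ᵥ* (A * Ap) := by
        rw [Matrix.star_mulVec, hp3]
      rw [← e, hPu, star_zero]
    have huu : star u ⬝ᵥ u = 0 := by
      have e : star u ⬝ᵥ u = star u ⬝ᵥ w - star u ⬝ᵥ ((A * Ap) *ᵥ w) := by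
        nth_rewrite 2 [hu]
        rw [dotProduct_sub]
      rw [e, hinner, Matrix.dotProduct_mulVec, hstarP, zero_dotProduct, sub_zero]
    have hu0 : u = 0 := dotProduct_star_self_eq_zero.mp huu
    have e : w - (A * Ap) *ᵥ w = 0 := hu.symm.trans hu0
    exact (sub_eq_zero.mp e).symm
  -- kernel transfer
  have kS_of_kR : ∀ y : n → ℂ, R *ᵥ y = 0 → S *ᵥ y = 0 := by
    intro y hy
    have hApy : Ap *ᵥ y = 0 := (PencilAux.sqrt_mulVec_zero_iff hApPSD y).mp hy
    have hAy : A *ᵥ y = 0 := by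
      have e : A = (A * A) * Ap := by
        calc A = A * Ap * A := hp1.symm
          _ = A * (A * Ap) := by rw [Matrix.mul_assoc, hPcomm]
          _ = (A * A) * Ap := by simp only [Matrix.mul_assoc]
      rw [e, ← Matrix.mulVec_mulVec, hApy, Matrix.mulVec_zero]
    exact (PencilAux.sqrt_mulVec_zero_iff hA y).mpr hAy
  have kA_of_kS : ∀ y : n → ℂ, S *ᵥ y = 0 → A *ᵥ y = 0 := by
    intro y hy
    rw [← hSS, ← Matrix.mulVec_mulVec, hy, Matrix.mulVec_zero]
  -- unitary facts
  have hU1 : U * Uᴴ = 1 := by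
    have := Matrix.mem_unitaryGroup_iff.mp hU
    rwa [Matrix.star_eq_conjTranspose] at this
  have hU2 : Uᴴ * U = 1 := by
    have := Matrix.mem_unitaryGroup_iff'.mp hU
    rwa [Matrix.star_eq_conjTranspose] at this
  -- the pivot vector y
  set y : n → ℂ := (Uᴴ * T) *ᵥ w - lam • (S *ᵥ w) with hy
  -- equivalence for the LHS
  have key1 : T *ᵥ w = lam • ((U * S) *ᵥ w) ↔ y = 0 := by
    constructor
    · intro h
      rw [hy, ← Matrix.mulVec_mulVec, h, Matrix.mulVec_smul, Matrix.mulVec_mulVec,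
        ← Matrix.mul_assoc, hU2, Matrix.one_mul, sub_self]
    · intro h
      have e : (Uᴴ * T) *ᵥ w = lam • (S *ᵥ w) := sub_eq_zero.mp (hy ▸ h)
      have e2 : U *ᵥ ((Uᴴ * T) *ᵥ w) = U *ᵥ (lam • (S *ᵥ w)) := by rw [e]
      rw [Matrix.mulVec_mulVec, ← Matrix.mul_assoc, hU1, Matrix.one_mul,
        Matrix.mulVec_smul] at e2
      rw [e2, ← Matrix.mulVec_mulVec]
  -- equivalence for the RHS
  have hMw : (R * C * R) *ᵥ w = R *ᵥ ((Uᴴ * T) *ᵥ w) := by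
    calc (R * C * R) *ᵥ w = R *ᵥ (C *ᵥ (R *ᵥ w)) := by
          simp only [Matrix.mulVec_mulVec, Matrix.mul_assoc]
      _ = R *ᵥ (Uᴴ *ᵥ (T *ᵥ ((S * R) *ᵥ w))) := by
          rw [hC2]; simp only [Matrix.mulVec_mulVec, Matrix.mul_assoc]
      _ = R *ᵥ ((Uᴴ * T) *ᵥ w) := by
          rw [hSR, hPw]
          simp only [Matrix.mulVec_mulVec, Matrix.mul_assoc]
  have hlw : lam • w = R *ᵥ (lam • (S *ᵥ w)) := by
    rw [Matrix.mulVec_smul, Matrix.mulVec_mulVec, hRS, hPw]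
  have key2 : (R * C * R) *ᵥ w = lam • w ↔ R *ᵥ y = 0 := by
    rw [hMw, hlw, hy, Matrix.mulVec_sub, sub_eq_zero]
  -- R y = 0 iff y = 0
  have key3 : R *ᵥ y = 0 ↔ y = 0 := by
    constructor
    · intro h
      have hSy : S *ᵥ y = 0 := kS_of_kR y h
      set z : n → ℂ := (T * U) *ᵥ y with hz
      have hSz : S *ᵥ z = 0 := by
        calc S *ᵥ z = (S * T * U) *ᵥ y := by
              rw [hz, Matrix.mulVec_mulVec, ← Matrix.mul_assoc]
          _ = (Uᴴ * (T * S)) *ᵥ y := by rw [hpolar, hC2]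
          _ = Uᴴ *ᵥ (T *ᵥ (S *ᵥ y)) := by simp only [Matrix.mulVec_mulVec, Matrix.mul_assoc]
          _ = 0 := by rw [hSy, Matrix.mulVec_zero, Matrix.mulVec_zero]
      have hAz : A *ᵥ z = 0 := kA_of_kS z hSz
      have hPz : (A * Ap) *ᵥ z = 0 := by
        rw [hPcomm, ← Matrix.mulVec_mulVec, hAz, Matrix.mulVec_zero]
      have hzw : star z ⬝ᵥ w = 0 := by
        have hstarP : star z ᵥ* (A * Ap) = 0 := by
          have e : star ((A * Ap) *ᵥ z) = star z ᵥ* (A * Ap) := by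
            rw [Matrix.star_mulVec, hp3]
          rw [← e, hPz, star_zero]
        calc star z ⬝ᵥ w = star z ⬝ᵥ ((A * Ap) *ᵥ w) := by rw [hPw]
          _ = (star z ᵥ* (A * Ap)) ⬝ᵥ w := by rw [Matrix.dotProduct_mulVec]
          _ = 0 := by rw [hstarP, zero_dotProduct]
      have hyT : star y ⬝ᵥ ((Uᴴ * T) *ᵥ w) = 0 := by
        have e : star y ᵥ* (Uᴴ * T) = star z := by
          rw [hz, Matrix.star_mulVec]
          congr 1
          rw [Matrix.conjTranspose_mul, hTH]
        rw [Matrix.dotProduct_mulVec, e, hzw]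
      have hySw : star y ⬝ᵥ (S *ᵥ w) = 0 := by
        have e : star y ᵥ* S = 0 := by
          have e2 : star (S *ᵥ y) = star y ᵥ* S := by rw [Matrix.star_mulVec, hSH]
          rw [← e2, hSy, star_zero]
        rw [Matrix.dotProduct_mulVec, e, zero_dotProduct]
      have hyy : star y ⬝ᵥ y = 0 := by
        calc star y ⬝ᵥ y
            = star y ⬝ᵥ ((Uᴴ * T) *ᵥ w) - star y ⬝ᵥ (lam • (S *ᵥ w)) := by
              nth_rewrite 2 [hy]
              rw [dotProduct_sub]
          _ = 0 := by
              rw [hyT, dotProduct_smul, hySw, smul_zero, zero_sub, neg_zero]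
      exact dotProduct_star_self_eq_zero.mp hyy
    · intro h; rw [h, Matrix.mulVec_zero]
  -- put everything together
  have glhs : Matrix.toEuclideanLin T v = lam • Matrix.toEuclideanLin (U * S) v ↔
      T *ᵥ w = lam • ((U * S) *ᵥ w) := by
    rw [hvw, WithLp.equiv_symm_apply, Matrix.toEuclideanLin_apply_piLp_toLp,
      Matrix.toEuclideanLin_apply_piLp_toLp, ← WithLp.toLp_smul]
    exact (WithLp.equiv 2 (n → ℂ)).symm.apply_eq_iff_eq
  have grhs : Matrix.toEuclideanLin (R * C * R) v = lam • v ↔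
      (R * C * R) *ᵥ w = lam • w := by
    rw [hvw, WithLp.equiv_symm_apply, Matrix.toEuclideanLin_apply_piLp_toLp, ← WithLp.toLp_smul]
    exact (WithLp.equiv 2 (n → ℂ)).symm.apply_eq_iff_eq
  rw [glhs, grhs, key2, key1, key3]
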